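/- arXiv:1605.09161 — 2 statements merged into one kernel-verified Lean document; each statement's English description precedes it below -/
import Mathlib

section
/- Let G be a compact metric group acting continuously on a compact metric space N, let Δ ⊆ N be a closed set, and let λ be a Borel probability measure on G. Suppose for every y ∈ N, λ({α ∈ G : α·y ∈ Δ}) = 0. Then for every ε > 0 there exists an open neighborhood W of Δ such that λ({α ∈ G : α·y ∈ W}) < ε for every y ∈ N. -/
open MeasureTheory

/-- If a compact metric group `G` acts continuously on a compact metric space `N`, `Δ ⊆ N`
is closed, and a Borel probability measure `λ` on `G` gives measure zero to the visit set
`{α : α·y ∈ Δ}` for every `y`, then for every `ε > 0` there is an open neighborhood `W` of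
`Δ` whose visit sets all have `λ`-measure less than `ε`. -/
theorem small_neighborhood_of_null_visits {G N : Type*}
    [MetricSpace G] [CompactSpace G] [Group G] [IsTopologicalGroup G]
    [MeasurableSpace G] [BorelSpace G]
    [MetricSpace N] [CompactSpace N] [MulAction G N]
    (hcont : Continuous fun p : G × N => p.1 • p.2)
    (lam : Measure G) [IsProbabilityMeasure lam]
    (Δ : Set N) (hΔ : IsClosed Δ)
    (hnull : ∀ y : N, lam {α : G | α • y ∈ Δ} = 0) :
    ∀ ε : ℝ, 0 < ε → ∃ W : Set N, IsOpen W ∧ Δ ⊆ W ∧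
      ∀ y : N, lam {α : G | α • y ∈ W} < ENNReal.ofReal ε := by
  intro ε hε
  by_contra hcon
  push_neg at hcon
  have hbad : ∀ n : ℕ, ∃ y : N,
      ENNReal.ofReal ε ≤ lam {α : G | α • y ∈ Metric.thickening (1/(n+1)) Δ} := by
    intro n
    have hpos : (0:ℝ) < 1/(n+1) := by positivity
    exact hcon _ (Metric.isOpen_thickening) (Metric.self_subset_thickening hpos Δ)
  choose y hy using hbad
  obtain ⟨z, -, φ, hφ, hz⟩ := IsCompact.tendsto_subseq (x := y) isCompact_univ
    (fun n => Set.mem_univ _)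
  have huc : UniformContinuous fun p : G × N => p.1 • p.2 :=
    CompactSpace.uniformContinuous_of_continuous hcont
  rw [Metric.uniformContinuous_iff] at huc
  set C : ℕ → Set G := fun m => {α : G | α • z ∈ Metric.cthickening (1/(m+1)) Δ} with hC
  have hCclosed : ∀ m, IsClosed (C m) :=
    fun m => (Metric.isClosed_cthickening).preimage (hcont.comp (Continuous.prodMk
      continuous_id continuous_const))
  have hCanti : Antitone C := by
    intro a b hab α hα
    refine Metric.cthickening_mono ?_ Δ hα
    have : (a:ℝ) + 1 ≤ (b:ℝ) + 1 := by
      have := (Nat.cast_le (α := ℝ)).2 hab; linarith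
    exact one_div_le_one_div_of_le (by positivity) this
  have hCge : ∀ m, ENNReal.ofReal ε ≤ lam (C m) := by
    intro m
    have hr : (0:ℝ) < 1/(2*(m+1)) := by positivity
    obtain ⟨δ, hδ, hδ'⟩ := huc _ hr
    obtain ⟨K1, hK1⟩ := Metric.tendsto_atTop.mp hz δ hδ
    -- choose k with dist (y (φ k)) z < δ and 1/(φ k + 1) ≤ 1/(2(m+1))
    set k := max K1 (2*m+1) with hk
    have hd : dist (y (φ k)) z < δ := hK1 k (le_max_left _ _)
    have hφk : (2*m+1 : ℕ) ≤ φ k := le_trans (le_max_right _ _) (hφ.le_apply)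
    have hrad : (1:ℝ)/(φ k + 1) ≤ 1/(2*(m+1)) := by
      apply one_div_le_one_div_of_le (by positivity)
      have := (Nat.cast_le (α := ℝ)).2 hφk
      push_cast at this ⊢
      linarith
    refine le_trans (hy (φ k)) (measure_mono ?_)
    intro α hα
    rw [Set.mem_setOf_eq, Metric.mem_thickening_iff] at hα
    obtain ⟨w, hw, hdist⟩ := hα
    have hdz : dist (α • z) (α • y (φ k)) < 1/(2*(m+1)) := by
      apply hδ' (a := (α, z)) (b := (α, y (φ k)))
      have : dist ((α, z) : G × N) (α, y (φ k)) = dist z (y (φ k)) := by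
        simp [Prod.dist_eq, dist_nonneg]
      rw [this, dist_comm]; exact hd
    have : dist (α • z) w < 1/(m+1) := by
      calc dist (α • z) w ≤ dist (α • z) (α • y (φ k)) + dist (α • y (φ k)) w :=
            dist_triangle _ _ _
        _ < 1/(2*(m+1)) + 1/(2*(m+1)) := by
            have := lt_of_lt_of_le hdist hrad; linarith
        _ = 1/(m+1) := by
            rw [← add_div]
            rw [show ((1:ℝ)+1) = 2*1 by norm_num]
            rw [mul_div_mul_left _ _ (two_ne_zero)]
    exact Metric.thickening_subset_cthickening _ _
      (Metric.mem_thickening_iff.2 ⟨w, hw, this⟩)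
  -- intersection
  have hInt : ⋂ m, C m ⊆ {α : G | α • z ∈ Δ} := by
    intro α hα
    have h0 : ∀ m : ℕ, EMetric.infEdist (α • z) Δ ≤ ENNReal.ofReal (1/(m+1)) := by
      intro m
      have := Set.mem_iInter.1 hα m
      exact this
    have htend : Filter.Tendsto (fun m : ℕ => ENNReal.ofReal (1/(m+1)))
        Filter.atTop (nhds 0) := by
      rw [← ENNReal.ofReal_zero]
      exact ENNReal.tendsto_ofReal tendsto_one_div_add_atTop_nhds_zero_nat
    have : EMetric.infEdist (α • z) Δ ≤ 0 := ge_of_tendsto' htend h0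
    have hmem : α • z ∈ closure Δ := EMetric.mem_closure_iff_infEdist_zero.2 (le_antisymm this bot_le)
    exact hΔ.closure_eq ▸ hmem
  have hlim : Filter.Tendsto (fun m => lam (C m)) Filter.atTop (nhds (lam (⋂ m, C m))) :=
    tendsto_measure_iInter_atTop (fun m => (hCclosed m).measurableSet.nullMeasurableSet) hCanti
      ⟨0, measure_ne_top _ _⟩
  have hge : ENNReal.ofReal ε ≤ lam (⋂ m, C m) := ge_of_tendsto' hlim hCge |>.trans_eq rfl
  have : lam (⋂ m, C m) = 0 := measure_mono_null hInt (hnull z)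
  rw [this] at hge
  exact absurd hge (by simpa using (ENNReal.ofReal_pos.2 hε).ne')
end

section
/- Let S¹ = ℝ/ℤ act continuously on a compact metric space N and let Δ ⊆ N be a closed set such that for every y ∈ N the set {α ∈ S¹ : α·y ∈ Δ} is finite. Then for every ε > 0 there is an open neighborhood W of Δ such that λ({α ∈ S¹ : α·y ∈ W}) < ε for all y ∈ N, where λ is normalized Haar measure on S¹. -/
open MeasureTheory

theorem AddCircle.noAtoms_volume : NoAtoms (volume : Measure (AddCircle (1 : ℝ))) := by
  haveI : Fact ((0:ℝ) < 1) := ⟨one_pos⟩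
  constructor
  intro x
  have h : ({x} : Set (AddCircle (1:ℝ))) = Metric.closedBall x 0 := by
    simp [Metric.closedBall_zero]
  rw [h, AddCircle.volume_closedBall]
  simp

/-- For a continuous `S¹`-action on a compact metric space and a closed set `Δ` met by every
orbit at finitely many times, every `ε > 0` admits an open neighborhood `W` of `Δ` whose
visit-time sets have Haar measure less than `ε`. -/
theorem small_neighborhood_of_finite_visits {N : Type*}
    [MetricSpace N] [CompactSpace N] [AddAction (AddCircle (1 : ℝ)) N]
    (hcont : Continuous fun p : AddCircle (1 : ℝ) × N => p.1 +ᵥ p.2)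
    (Δ : Set N) (hΔ : IsClosed Δ)
    (hfin : ∀ y : N, {α : AddCircle (1 : ℝ) | α +ᵥ y ∈ Δ}.Finite) :
    ∀ ε : ℝ, 0 < ε → ∃ W : Set N, IsOpen W ∧ Δ ⊆ W ∧
      ∀ y : N, (volume : Measure (AddCircle (1 : ℝ))) {α : AddCircle (1 : ℝ) | α +ᵥ y ∈ W}
        < ENNReal.ofReal ε := by
  intro ε hε
  haveI : Fact ((0:ℝ) < 1) := ⟨one_pos⟩
  haveI : NullSingletonClass (volume : Measure (AddCircle (1:ℝ))) := AddCircle.noAtoms_volume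
  rcases Set.eq_empty_or_nonempty Δ with hΔe | hne
  · refine ⟨∅, isOpen_empty, by simp [hΔe], fun y => ?_⟩
    simp only [Set.mem_empty_iff_false, Set.setOf_false, measure_empty]
    exact ENNReal.ofReal_pos.mpr hε
  -- uniform continuity of the action
  have hUC : UniformContinuous (fun p : AddCircle (1:ℝ) × N => p.1 +ᵥ p.2) :=
    CompactSpace.uniformContinuous_of_continuous hcont
  -- pointwise key lemma
  have key : ∀ y : N, ∃ r : ℝ, 0 < r ∧ ∃ η : ℝ, 0 < η ∧ ∀ y' ∈ Metric.ball y η,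
      (volume : Measure (AddCircle (1:ℝ)))
        {α : AddCircle (1:ℝ) | Metric.infDist (α +ᵥ y') Δ < r} < ENNReal.ofReal ε := by
    intro y
    set A : ℕ → Set (AddCircle (1:ℝ)) :=
      fun n => {α | Metric.infDist (α +ᵥ y) Δ ≤ 1 / (n + 1)} with hA
    have hcy : Continuous fun α : AddCircle (1:ℝ) => Metric.infDist (α +ᵥ y) Δ :=
      (Metric.continuous_infDist_pt Δ).comp (hcont.comp (Continuous.prodMk_left y))
    have hAclosed : ∀ n, IsClosed (A n) := fun n =>
      isClosed_le hcy continuous_const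
    have hAanti : Antitone A := by
      intro m n hmn α hα
      simp only [hA, Set.mem_setOf_eq] at hα ⊢
      refine le_trans hα ?_
      have hc : (m : ℝ) ≤ n := Nat.cast_le.mpr hmn
      have hm0 : (0:ℝ) ≤ m := Nat.cast_nonneg m
      gcongr <;> linarith
    have hAint : ⋂ n, A n = {α : AddCircle (1:ℝ) | α +ᵥ y ∈ Δ} := by
      ext α
      simp only [Set.mem_iInter, Set.mem_setOf_eq, hA]
      constructor
      · intro h
        have h0 : Metric.infDist (α +ᵥ y) Δ ≤ 0 := by
          refine le_of_forall_pos_le_add (fun δ hδ => ?_)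
          obtain ⟨n, hn⟩ := exists_nat_one_div_lt hδ
          calc Metric.infDist (α +ᵥ y) Δ ≤ 1 / (n + 1) := h n
            _ ≤ 0 + δ := by linarith
        have h0' : Metric.infDist (α +ᵥ y) Δ = 0 :=
          le_antisymm h0 Metric.infDist_nonneg
        have := (Metric.mem_closure_iff_infDist_zero hne).mpr h0'
        rwa [hΔ.closure_eq] at this
      · intro h n
        rw [Metric.infDist_zero_of_mem h]
        positivity
    have h0 : (volume : Measure (AddCircle (1:ℝ))) (⋂ n, A n) = 0 := by
      rw [hAint]; exact (hfin y).measure_zero _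
    have htend : Filter.Tendsto (fun n => (volume : Measure (AddCircle (1:ℝ))) (A n))
        Filter.atTop (nhds 0) := by
      have := MeasureTheory.tendsto_measure_iInter_atTop
        (μ := (volume : Measure (AddCircle (1:ℝ)))) (s := A)
        (fun n => (hAclosed n).measurableSet.nullMeasurableSet)
        hAanti ⟨0, measure_ne_top _ _⟩
      rwa [h0] at this
    obtain ⟨n, hn⟩ : ∃ n, (volume : Measure (AddCircle (1:ℝ))) (A n) < ENNReal.ofReal ε := by
      have := htend.eventually_lt_const (ENNReal.ofReal_pos.mpr hε)
      exact this.exists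
    have hδpos : (0:ℝ) < 1 / (2 * (n + 1)) := by positivity
    obtain ⟨η, hηpos, hη⟩ := Metric.uniformContinuous_iff.mp hUC _ hδpos
    refine ⟨1 / (2 * (n + 1)), hδpos, η, hηpos, fun y' hy' => ?_⟩
    refine lt_of_le_of_lt (measure_mono ?_) hn
    intro α hα
    simp only [Set.mem_setOf_eq] at hα ⊢
    have hd : dist (α +ᵥ y') (α +ᵥ y) < 1 / (2 * (n + 1)) := by
      have : dist ((α, y') : AddCircle (1:ℝ) × N) (α, y) < η := by
        rw [Prod.dist_eq]
        simp only [dist_self]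
        exact max_lt hηpos (Metric.mem_ball.mp hy')
      exact hη this
    have hn1 : (0:ℝ) < (n:ℝ) + 1 := by positivity
    calc Metric.infDist (α +ᵥ y) Δ
        ≤ Metric.infDist (α +ᵥ y') Δ + dist (α +ᵥ y) (α +ᵥ y') :=
          Metric.infDist_le_infDist_add_dist
      _ ≤ 1 / (2 * (n + 1)) + 1 / (2 * (n + 1)) := by
          rw [dist_comm]; exact add_le_add hα.le hd.le
      _ = 1 / (n + 1) := by field_simp; norm_num
  choose r hr η hηp hball using key
  obtain ⟨t, ht⟩ := IsCompact.elim_finite_subcover isCompact_univ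
    (fun y => Metric.ball y (η y)) (fun y => Metric.isOpen_ball)
    (fun y _ => Set.mem_iUnion.2 ⟨y, Metric.mem_ball_self (hηp y)⟩)
  have htne : t.Nonempty := by
    obtain ⟨y0, hy0⟩ := hne
    obtain ⟨i, hi, -⟩ := Set.mem_iUnion₂.mp (ht (Set.mem_univ y0))
    exact ⟨i, hi⟩
  set ρ := t.inf' htne r with hρdef
  have hρpos : 0 < ρ := (Finset.lt_inf'_iff htne).mpr (fun i _ => hr i)
  refine ⟨{x | Metric.infDist x Δ < ρ}, ?_, ?_, ?_⟩
  · exact isOpen_lt (Metric.continuous_infDist_pt Δ) continuous_const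
  · intro x hx
    simp only [Set.mem_setOf_eq, Metric.infDist_zero_of_mem hx]
    exact hρpos
  · intro y
    obtain ⟨i, hi, hyi⟩ := Set.mem_iUnion₂.mp (ht (Set.mem_univ y))
    refine lt_of_le_of_lt (measure_mono ?_) (hball i y hyi)
    intro α hα
    simp only [Set.mem_setOf_eq] at hα ⊢
    exact lt_of_lt_of_le hα (Finset.inf'_le r hi)
end
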